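/- If A = {a_n} is a strictly increasing sequence of nonnegative integers forming an asymptotic basis of order h, then limsup_{n→∞} a_n/n^h ≤ 1/h!. -/

import Mathlib

open Filter

-- counting lemma
lemma count_key (h n₀ : ℕ) (a : ℕ → ℕ) (ha : StrictMono a)
    (hb : ∀ n : ℕ, n₀ ≤ n →
      ∃ c : Fin h → ℕ, (∀ i, c i ∈ Set.range a) ∧ ∑ i, c i = n)
    (n : ℕ) : a n ≤ (n + h).choose h + n₀ := by
  rcases lt_or_ge (a n) n₀ with hlt | hge
  · omega
  · set g : Sym (Fin (n + 1)) h → ℕ := fun s => (s.1.map (fun i : Fin (n+1) => a i)).sum with hg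
    have hsurj : Set.SurjOn g (Finset.univ : Finset (Sym (Fin (n+1)) h)) (Finset.Icc n₀ (a n)) := by
      intro m hm
      simp only [Finset.coe_Icc, Set.mem_Icc] at hm
      obtain ⟨c, hc, hsum⟩ := hb m hm.1
      have hidx : ∀ j : Fin h, ∃ i : Fin (n + 1), a i = c j := by
        intro j
        obtain ⟨i, hi⟩ := hc j
        have hle : c j ≤ a n := le_trans (hsum ▸ Finset.single_le_sum (f := c) (fun _ _ => Nat.zero_le _) (Finset.mem_univ j)) hm.2
        have : i ≤ n := by
          by_contra hcon
          exact absurd (hi ▸ ha (by omega : n < i)) (by omega)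
        exact ⟨⟨i, by omega⟩, hi⟩
      choose v hv using hidx
      refine ⟨⟨(List.ofFn v : List _), by simp⟩, Finset.mem_coe.2 (Finset.mem_univ _), ?_⟩
      simp only [hg]
      rw [Multiset.map_coe, List.map_ofFn, Multiset.sum_coe, List.sum_ofFn]
      simp only [Function.comp]
      rw [← hsum]
      exact Finset.sum_congr rfl fun j _ => hv j
    have hcard := Finset.card_le_card_of_surjOn g hsurj
    rw [Nat.card_Icc, Finset.card_univ, Sym.card_sym_eq_choose] at hcard
    simp only [Fintype.card_fin] at hcard
    have : (n + 1 + h - 1).choose h = (n + h).choose h := by congr 1; omega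
    omega

/-- If `A = {a_n}` is a strictly increasing sequence of nonnegative integers forming an
asymptotic basis of order `h`, then `limsup a_n / n^h ≤ 1/h!`. -/
theorem stmt2 (h : ℕ) (a : ℕ → ℕ) (ha : StrictMono a)
    (hbasis : ∃ n₀ : ℕ, ∀ n : ℕ, n₀ ≤ n →
      ∃ c : Fin h → ℕ, (∀ i, c i ∈ Set.range a) ∧ ∑ i, c i = n) :
    Filter.limsup (fun n : ℕ => (a n : ℝ) / (n : ℝ) ^ h) Filter.atTop
      ≤ 1 / Nat.factorial h := by
  obtain ⟨n₀, hb⟩ := hbasis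
  rcases Nat.eq_zero_or_pos h with hz | hpos
  · subst hz
    obtain ⟨c₁, _, hs1⟩ := hb n₀ le_rfl
    obtain ⟨c₂, _, hs2⟩ := hb (n₀ + 1) (by omega)
    simp at hs1 hs2
  -- h ≥ 1
  have hfac : (0 : ℝ) < (h.factorial : ℝ) := by positivity
  set b : ℕ → ℝ := fun n => (1 + (h : ℝ) / n) ^ h / h.factorial + n₀ / (n : ℝ) ^ h with hbdef
  have htend : Tendsto b atTop (nhds (1 / h.factorial)) := by
    have t1 : Tendsto (fun n : ℕ => (1 + (h : ℝ) / n)) atTop (nhds 1) := by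
      have := (tendsto_const_div_atTop_nhds_zero_nat (h : ℝ)).const_add 1
      simpa using this
    have t2 : Tendsto (fun n : ℕ => (1 + (h : ℝ) / n) ^ h / h.factorial) atTop
        (nhds (1 / h.factorial)) := by
      have := (t1.pow h).div_const (h.factorial : ℝ)
      simpa using this
    have t3 : Tendsto (fun n : ℕ => (n₀ : ℝ) / (n : ℝ) ^ h) atTop (nhds 0) := by
      apply Tendsto.div_atTop (tendsto_const_nhds)
      exact (tendsto_pow_atTop (by omega : h ≠ 0)).comp tendsto_natCast_atTop_atTop
    simpa using t2.add t3
  have hfb : ∀ᶠ n in atTop, (a n : ℝ) / (n : ℝ) ^ h ≤ b n := by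
    filter_upwards [eventually_ge_atTop 1] with n hn
    have hnpos : (0 : ℝ) < (n : ℝ) ^ h := by positivity
    have key := count_key h n₀ a ha hb n
    have h1 : ((n + h).choose h : ℝ) ≤ ((n : ℝ) + h) ^ h / h.factorial := by
      rw [le_div_iff₀ hfac]
      have := Nat.descFactorial_le_pow (n + h) h
      rw [Nat.descFactorial_eq_factorial_mul_choose] at this
      calc ((n + h).choose h : ℝ) * h.factorial = ((h.factorial * (n + h).choose h : ℕ) : ℝ) := by
            push_cast; ring
        _ ≤ (((n + h) ^ h : ℕ) : ℝ) := by exact_mod_cast this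
        _ = ((n : ℝ) + h) ^ h := by push_cast; ring
    have h2 : (a n : ℝ) ≤ ((n : ℝ) + h) ^ h / h.factorial + n₀ := by
      calc (a n : ℝ) ≤ ((n + h).choose h : ℝ) + n₀ := by exact_mod_cast key
        _ ≤ _ := by linarith
    have hb_eq : b n = (((n : ℝ) + h) ^ h / h.factorial + n₀) / (n : ℝ) ^ h := by
      have hn0 : (n : ℝ) ≠ 0 := by positivity
      simp only [hbdef]
      field_simp
      rw [← mul_pow, div_mul_cancel₀ _ hn0]
    rw [hb_eq]
    gcongr
  have hcobdd : IsCoboundedUnder (· ≤ ·) atTop (fun n : ℕ => (a n : ℝ) / (n : ℝ) ^ h) := by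
    apply isCoboundedUnder_le_of_eventually_le atTop (x := 0)
    filter_upwards with n
    positivity
  have hbdd : IsBoundedUnder (· ≤ ·) atTop b := htend.isBoundedUnder_le
  calc limsup (fun n : ℕ => (a n : ℝ) / (n : ℝ) ^ h) atTop
      ≤ limsup b atTop := limsup_le_limsup hfb hcobdd hbdd
    _ = 1 / h.factorial := htend.limsup_eq
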